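/- Let P(λ) = λ²A₂ + λA₁ + A₀ with A_i ∈ ℂ^{n×n}, and let D ⊆ ℂ with 0 ∉ D. If the bivariate matrix polynomial (z₁,z₂) ↦ z₁z₂A₂ + z₂A₁ + A₀ is stable with respect to D² (i.e., (μ₁μ₂A₂ + μ₂A₁ + A₀)x ≠ 0 for all (μ₁,μ₂) ∈ D² and x ≠ 0), then P(λ) is hyperstable with respect to D. -/

import Mathlib

lemma exists_dual_sep {n : ℕ} (K : Submodule ℂ (Fin n → ℂ)) (v : Fin n → ℂ) (hv : v ∉ K) :
    ∃ y : Fin n → ℂ, (∀ w ∈ K, dotProduct (star y) w = 0) ∧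
      dotProduct (star y) v ≠ 0 := by
  have hπ : K.mkQ v ≠ 0 := by simpa [Submodule.mkQ_apply, Submodule.Quotient.mk_eq_zero] using hv
  obtain ⟨ψ, hψ⟩ : ∃ ψ : Module.Dual ℂ ((Fin n → ℂ) ⧸ K), ψ (K.mkQ v) ≠ 0 := by
    by_contra h
    push_neg at h
    exact hπ ((Module.forall_dual_apply_eq_zero_iff ℂ _).mp h)
  set φ : (Fin n → ℂ) →ₗ[ℂ] ℂ := ψ.comp K.mkQ with hφ
  refine ⟨star (fun i => φ (fun j => if i = j then 1 else 0)), ?_, ?_⟩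
  · intro w hw
    have : dotProduct (star (star (fun i => φ (fun j => if i = j then 1 else 0)))) w = φ w := by
      rw [star_star, LinearMap.pi_apply_eq_sum_univ φ w, dotProduct]
      simp [mul_comm]
    rw [this]
    simp [hφ, (Submodule.Quotient.mk_eq_zero K).2 hw]
  · have : dotProduct (star (star (fun i => φ (fun j => if i = j then 1 else 0)))) v = φ v := by
      rw [star_star, LinearMap.pi_apply_eq_sum_univ φ v, dotProduct]
      simp [mul_comm]
    rw [this]
    exact hψ

/-- `P` is hyperstable with respect to `D`. -/
def Hyperstable {n : ℕ} (P : ℂ → Matrix (Fin n) (Fin n) ℂ) (D : Set ℂ) : Prop :=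
  ∀ x : Fin n → ℂ, x ≠ 0 → ∃ y : Fin n → ℂ, y ≠ 0 ∧
    ∀ μ ∈ D, dotProduct (star y) ((P μ).mulVec x) ≠ 0

theorem stmt9 {n : ℕ} (A₀ A₁ A₂ : Matrix (Fin n) (Fin n) ℂ) (D : Set ℂ) (h0 : (0 : ℂ) ∉ D)
    (hstab : ∀ μ₁ ∈ D, ∀ μ₂ ∈ D, ∀ x : Fin n → ℂ, x ≠ 0 →
      ((μ₁ * μ₂) • A₂ + μ₂ • A₁ + A₀).mulVec x ≠ 0) :
    Hyperstable (fun μ => μ ^ 2 • A₂ + μ • A₁ + A₀) D := by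
  intro x hx
  set v2 := A₂.mulVec x with hv2def
  set v1 := A₁.mulVec x with hv1def
  set v0 := A₀.mulVec x with hv0def
  -- dot product expansion of P(μ)x against y
  have hP : ∀ (μ : ℂ) (y : Fin n → ℂ),
      dotProduct (star y) (((μ ^ 2 • A₂ + μ • A₁ + A₀)).mulVec x)
        = μ ^ 2 * dotProduct (star y) v2 + μ * dotProduct (star y) v1
          + dotProduct (star y) v0 := by
    intro μ y
    simp [Matrix.add_mulVec, Matrix.smul_mulVec, dotProduct_add,
      dotProduct_smul, smul_eq_mul, hv2def, hv1def, hv0def]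
  have hS : ∀ μ₁ ∈ D, ∀ μ₂ ∈ D, (μ₁ * μ₂) • v2 + μ₂ • v1 + v0 ≠ 0 := by
    intro μ₁ h₁ μ₂ h₂
    have := hstab μ₁ h₁ μ₂ h₂ x hx
    simpa [Matrix.add_mulVec, Matrix.smul_mulVec, hv2def, hv1def, hv0def] using this
  rcases D.eq_empty_or_nonempty with hD | ⟨μ₀, hμ₀⟩
  · exact ⟨x, hx, by simp [hD]⟩
  by_cases hmem : v0 ∈ Submodule.span ℂ ({v1, v2} : Set (Fin n → ℂ))
  · obtain ⟨α, β, hαβ⟩ := Submodule.mem_span_pair.mp hmem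
    -- restated stability
    have hS' : ∀ μ₁ ∈ D, ∀ μ₂ ∈ D, (μ₁ * μ₂ + β) • v2 + (μ₂ + α) • v1 ≠ 0 := by
      intro μ₁ h₁ μ₂ h₂ heq
      apply hS μ₁ h₁ μ₂ h₂
      rw [← hαβ]
      rw [show (μ₁ * μ₂) • v2 + μ₂ • v1 + (α • v1 + β • v2)
            = (μ₁ * μ₂ + β) • v2 + (μ₂ + α) • v1 by module]
      exact heq
    by_cases hmem1 : v1 ∈ Submodule.span ℂ ({v2} : Set (Fin n → ℂ))
    · obtain ⟨γ, hγ⟩ := Submodule.mem_span_singleton.mp hmem1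
      have hg : ∀ μ ∈ D, (μ * μ + β) + (μ + α) * γ ≠ 0 := by
        intro μ hμ hc
        apply hS' μ hμ μ hμ
        rw [← hγ, smul_smul, ← add_smul, hc, zero_smul]
      have hv2ne : v2 ≠ 0 := by
        intro hc
        apply hS' μ₀ hμ₀ μ₀ hμ₀
        rw [← hγ, hc]
        simp
      obtain ⟨y, -, hy⟩ := exists_dual_sep ⊥ v2 (by simpa using hv2ne)
      refine ⟨y, fun hc => hy (by simp [hc]), ?_⟩
      intro μ hμ
      rw [hP]
      have e1 : dotProduct (star y) v1 = γ * dotProduct (star y) v2 := by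
        rw [← hγ, dotProduct_smul, smul_eq_mul]
      have e0 : dotProduct (star y) v0
          = (α * γ + β) * dotProduct (star y) v2 := by
        rw [← hαβ, ← hγ]
        simp [dotProduct_add, dotProduct_smul, smul_eq_mul]
        ring
      rw [e1, e0]
      have : μ ^ 2 * dotProduct (star y) v2 + μ * (γ * dotProduct (star y) v2)
          + (α * γ + β) * dotProduct (star y) v2
          = ((μ * μ + β) + (μ + α) * γ) * dotProduct (star y) v2 := by ring
      rw [this]
      exact mul_ne_zero (hg μ hμ) hy
    · by_cases hα : -α ∈ D
      · -- α ≠ 0, v2 ≠ 0, β - αμ ≠ 0 on D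
        have hαne : α ≠ 0 := by
          intro hc
          apply h0
          rw [hc, neg_zero] at hα
          exact hα
        have hβ : ∀ μ ∈ D, μ * (-α) + β ≠ 0 := by
          intro μ hμ hc
          apply hS' μ hμ (-α) hα
          rw [hc]
          simp
        have hv2ne : v2 ≠ 0 := by
          intro hc
          apply hS' μ₀ hμ₀ (-α) hα
          rw [hc]
          simp
        have hmem2 : v2 ∉ Submodule.span ℂ ({v1} : Set (Fin n → ℂ)) := by
          intro hc
          obtain ⟨c, hcc⟩ := Submodule.mem_span_singleton.mp hc
          have hcne : c ≠ 0 := by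
            intro h; rw [h, zero_smul] at hcc; exact hv2ne hcc.symm
          apply hmem1
          rw [Submodule.mem_span_singleton]
          exact ⟨c⁻¹, by rw [← hcc, smul_smul, inv_mul_cancel₀ hcne, one_smul]⟩
        obtain ⟨y₁, hy₁K, hy₁⟩ := exists_dual_sep (Submodule.span ℂ ({v2} : Set (Fin n → ℂ))) v1 hmem1
        obtain ⟨y₂, hy₂K, hy₂⟩ := exists_dual_sep (Submodule.span ℂ ({v1} : Set (Fin n → ℂ))) v2 hmem2
        set c1 := dotProduct (star y₁) v1 with hc1
        set c2 := dotProduct (star y₂) v2 with hc2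
        have hy₁v2 : dotProduct (star y₁) v2 = 0 :=
          hy₁K v2 (Submodule.subset_span rfl)
        have hy₂v1 : dotProduct (star y₂) v1 = 0 :=
          hy₂K v1 (Submodule.subset_span rfl)
        set y := star (β * c1⁻¹) • y₁ + star (-α * c2⁻¹) • y₂ with hy
        have hdot : ∀ v : Fin n → ℂ, dotProduct (star y) v
            = β * c1⁻¹ * dotProduct (star y₁) v
              + (-α * c2⁻¹) * dotProduct (star y₂) v := by
          intro v
          rw [hy, star_add, star_smul, star_smul, star_star, star_star,
            add_dotProduct, smul_dotProduct, smul_dotProduct]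
          simp [smul_eq_mul]
        have ev1 : dotProduct (star y) v1 = β := by
          rw [hdot, hy₂v1, ← hc1, mul_assoc, inv_mul_cancel₀ hy₁]
          ring
        have ev2 : dotProduct (star y) v2 = -α := by
          rw [hdot, hy₁v2, ← hc2]
          field_simp
          ring
        have ev0 : dotProduct (star y) v0 = 0 := by
          rw [← hαβ, dotProduct_add, dotProduct_smul, dotProduct_smul,
            ev1, ev2, smul_eq_mul, smul_eq_mul]
          ring
        refine ⟨y, ?_, ?_⟩
        · intro hc
          apply hαne
          have : dotProduct (star y) v2 = 0 := by rw [hc]; simp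
          rw [ev2] at this
          simpa using this
        · intro μ hμ
          rw [hP, ev1, ev2, ev0]
          have : μ ^ 2 * -α + μ * β + 0 = μ * (μ * (-α) + β) := by ring
          rw [this]
          exact mul_ne_zero (fun h => h0 (h ▸ hμ)) (hβ μ hμ)
      · -- -α ∉ D : use y ⊥ v2 with ⟨y,v1⟩ ≠ 0
        obtain ⟨y, hyK, hy⟩ := exists_dual_sep (Submodule.span ℂ ({v2} : Set (Fin n → ℂ))) v1 hmem1
        have hyv2 : dotProduct (star y) v2 = 0 := hyK v2 (Submodule.subset_span rfl)
        refine ⟨y, fun hc => hy (by simp [hc]), ?_⟩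
        intro μ hμ
        rw [hP, hyv2]
        have ev0 : dotProduct (star y) v0 = α * dotProduct (star y) v1 := by
          rw [← hαβ, dotProduct_add, dotProduct_smul, dotProduct_smul,
            hyv2, smul_eq_mul, smul_eq_mul]
          ring
        rw [ev0]
        have : μ ^ 2 * 0 + μ * dotProduct (star y) v1 + α * dotProduct (star y) v1
            = (μ + α) * dotProduct (star y) v1 := by ring
        rw [this]
        refine mul_ne_zero ?_ hy
        intro hc
        apply hα
        have : μ = -α := by linear_combination hc
        rw [← this]
        exact hμ
  · -- v0 ∉ span {v1, v2}
    obtain ⟨y, hyK, hy⟩ := exists_dual_sep (Submodule.span ℂ ({v1, v2} : Set (Fin n → ℂ))) v0 hmem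
    have hyv1 : dotProduct (star y) v1 = 0 :=
      hyK v1 (Submodule.subset_span (by simp))
    have hyv2 : dotProduct (star y) v2 = 0 :=
      hyK v2 (Submodule.subset_span (by simp))
    refine ⟨y, fun hc => hy (by simp [hc]), ?_⟩
    intro μ hμ
    rw [hP, hyv1, hyv2]
    simpa using hy
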